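/- For every natural number n ≥ 8, there are exactly fifteen (n−3)-dimensional numbers in the 2^n space; that is, T(n, n−3) = 15. -/

import Mathlib

set_option maxRecDepth 100000

/-- The dimension of a natural number: the number of prime factors counted with multiplicity. -/
def dimension (m : ℕ) : ℕ := m.primeFactorsList.length

/-- `T n d` is the number of natural numbers `m` with `1 ≤ m ≤ 2^n` and dimension `d`. -/
def T (n d : ℕ) : ℕ :=
  ((Finset.Icc 1 (2 ^ n)).filter (fun m => dimension m = d)).card

/-- Fueled trial-division count of prime factors, kernel-computable. -/
def omg : ℕ → ℕ → ℕ → ℕ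
  | 0, _, _ => 0
  | f+1, d, m => if m ≤ 1 then 0 else if d ∣ m then 1 + omg f d (m/d) else omg f (d+1) m

lemma dim_mul {a b : ℕ} (ha : a ≠ 0) (hb : b ≠ 0) :
    dimension (a * b) = dimension a + dimension b := by
  have h := ArithmeticFunction.cardFactors_mul ha hb
  simpa [dimension, ArithmeticFunction.cardFactors_apply] using h

lemma dim_two_pow (a : ℕ) : dimension (2 ^ a) = a := by
  simp [dimension, Nat.prime_two.primeFactorsList_pow]

lemma omg_eq : ∀ (f d m : ℕ), 2 ≤ d → (∀ p, p.Prime → p ∣ m → d ≤ p) →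
    m + m < f + d → omg f d m = dimension m := by
  intro f
  induction f with
  | zero =>
    intro d m hd hinv hb
    rcases Nat.lt_or_ge m 2 with hm | hm
    · interval_cases m <;> simp [omg, dimension]
    · exfalso
      have hp := Nat.minFac_prime (show m ≠ 1 by omega)
      have hdvd := Nat.minFac_dvd m
      have h1 := hinv _ hp hdvd
      have h2 := Nat.le_of_dvd (by omega) hdvd
      omega
  | succ f ih =>
    intro d m hd hinv hb
    rcases Nat.lt_or_ge m 2 with hm | hm
    · interval_cases m <;> simp [omg, dimension]
    · have hm1 : ¬ m ≤ 1 := by omega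
      by_cases hdm : d ∣ m
      · -- d is prime
        have hdp : d.Prime := by
          have hp := Nat.minFac_prime (show d ≠ 1 by omega)
          have h1 := hinv _ hp (hp.dvd_of_dvd_pow (n := 1) (by simpa using (Nat.minFac_dvd d).trans hdm))
          have h2 := Nat.minFac_le (show 0 < d by omega)
          have : d.minFac = d := le_antisymm h2 h1
          rwa [← this]
        have hmd0 : m / d ≠ 0 := by
          have := Nat.div_pos (Nat.le_of_dvd (by omega) hdm) (by omega)
          omega
        have hrec : d * (m / d) = m := Nat.mul_div_cancel' hdm
        have hhalf : m / d + m / d ≤ m := by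
          have h1 : m / d ≤ m / 2 := Nat.div_le_div_left hd (by omega)
          have h2 : m / 2 + m / 2 ≤ m := by omega
          omega
        have hih : omg f d (m / d) = dimension (m / d) := by
          refine ih d (m / d) hd ?_ (by omega)
          intro p hp hpd
          exact hinv p hp (hpd.trans (Nat.div_dvd_of_dvd hdm))
        have hdim : dimension m = 1 + dimension (m / d) := by
          conv_lhs => rw [← hrec]
          rw [dim_mul (by omega) hmd0]
          simp [dimension, Nat.primeFactorsList_prime hdp]
        rw [omg, if_neg hm1, if_pos hdm, hih, hdim]
      · have hih : omg f (d+1) m = dimension m := by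
          refine ih (d+1) m (by omega) ?_ (by omega)
          intro p hp hpd
          have h1 := hinv p hp hpd
          have h2 : p ≠ d := by rintro rfl; exact hdm hpd
          omega
        rw [omg, if_neg hm1, if_neg hdm, hih]

lemma dim_omg (m : ℕ) : dimension m = omg (m + m + 1) 2 m := by
  refine (omg_eq (m + m + 1) 2 m le_rfl (fun p hp _ => hp.two_le) (by omega)).symm

lemma pow_lt_3 : ∀ j : ℕ, 6 ≤ j → 2 ^ (j + 3) < 3 ^ j := by
  intro j hj
  induction j, hj using Nat.le_induction with
  | base => norm_num
  | succ k hk ih =>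
    have h2 : 2 ^ (k + 1 + 3) = 2 * 2 ^ (k + 3) := by ring
    have h3 : 3 ^ (k + 1) = 3 * 3 ^ k := by ring
    rw [h2, h3]
    omega

lemma three_pow_le_prod : ∀ l : List ℕ, (∀ x ∈ l, 3 ≤ x) → 3 ^ l.length ≤ l.prod := by
  intro l
  induction l with
  | nil => simp
  | cons x xs ih =>
    intro h
    simp only [List.length_cons, List.prod_cons, pow_succ]
    have h1 := h x List.mem_cons_self
    have h2 := ih (fun y hy => h y (List.mem_cons_of_mem x hy))
    calc 3 ^ xs.length * 3 ≤ xs.prod * x := Nat.mul_le_mul h2 h1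
      _ = x * xs.prod := Nat.mul_comm _ _

/-- For n ≥ 8 there are exactly fifteen (n−3)-dimensional numbers in the 2^n space. -/
theorem sub_three_dim_count (n : ℕ) (hn : 8 ≤ n) : T n (n - 3) = 15 := by
  have hset : (Finset.Icc 1 (2 ^ n)).filter (fun m => dimension m = n - 3)
      = ((Finset.Icc 1 (2 ^ 8)).filter (fun m => dimension m = 5)).image
          (fun k => 2 ^ (n - 8) * k) := by
    ext m
    simp only [Finset.mem_image, Finset.mem_filter, Finset.mem_Icc]
    constructor
    · rintro ⟨⟨hm1, hm2⟩, hdim⟩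
      have hm0 : m ≠ 0 := by omega
      set a := m.factorization 2 with ha
      set q := m / 2 ^ a with hq
      have hfact : 2 ^ a * q = m := Nat.ordProj_mul_ordCompl_eq_self m 2
      have hq0 : q ≠ 0 := by
        intro h; rw [h, mul_zero] at hfact; omega
      have hqodd : ¬ 2 ∣ q := Nat.not_dvd_ordCompl Nat.prime_two hm0
      have hdm : a + dimension q = n - 3 := by
        rw [← hdim, ← hfact, dim_mul (pow_ne_zero _ two_ne_zero) hq0, dim_two_pow]
      set j := dimension q with hj
      have h3j : 3 ^ j ≤ q := by
        have h := three_pow_le_prod q.primeFactorsList ?_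
        · rwa [Nat.prod_primeFactorsList hq0] at h
        · intro x hx
          have hxp := Nat.prime_of_mem_primeFactorsList hx
          have hxd := Nat.dvd_of_mem_primeFactorsList hx
          have hx2 : x ≠ 2 := fun h => hqodd (h ▸ hxd)
          have := hxp.two_le
          omega
      have hj5 : j ≤ 5 := by
        by_contra hj6
        push_neg at hj6
        have h1 : 2 ^ (j + 3) < 3 ^ j := pow_lt_3 j (by omega)
        have hlt : 2 ^ n < m := by
          calc 2 ^ n = 2 ^ (n - 3 - j) * 2 ^ (j + 3) := by
                rw [← pow_add]; congr 1; omega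
            _ < 2 ^ (n - 3 - j) * 3 ^ j :=
                mul_lt_mul_of_pos_left h1 (Nat.pow_pos (by omega))
            _ ≤ 2 ^ a * q := by
                have haj : a = n - 3 - j := by omega
                rw [haj]; exact Nat.mul_le_mul_left _ h3j
            _ = m := hfact
        omega
      have ha8 : n - 8 ≤ a := by omega
      have hsplit : 2 ^ (n - 8) * (2 ^ (a - (n - 8)) * q) = m := by
        rw [← mul_assoc, ← pow_add]
        have : n - 8 + (a - (n - 8)) = a := by omega
        rw [this, hfact]
      refine ⟨2 ^ (a - (n - 8)) * q, ⟨⟨?_, ?_⟩, ?_⟩, hsplit⟩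
      · exact Nat.one_le_iff_ne_zero.mpr (mul_ne_zero (pow_ne_zero _ two_ne_zero)
          hq0)
      · have hle : 2 ^ (n - 8) * (2 ^ (a - (n - 8)) * q) ≤ 2 ^ (n - 8) * 2 ^ 8 := by
          rw [hsplit, ← pow_add]
          have : n - 8 + 8 = n := by omega
          rw [this]; exact hm2
        exact Nat.le_of_mul_le_mul_left hle (Nat.pow_pos (by omega))
      · rw [dim_mul (pow_ne_zero _ two_ne_zero) hq0, dim_two_pow]
        omega
    · rintro ⟨k, ⟨⟨hk1, hk2⟩, hkd⟩, rfl⟩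
      have hk0 : k ≠ 0 := by omega
      refine ⟨⟨?_, ?_⟩, ?_⟩
      · exact Nat.one_le_iff_ne_zero.mpr (mul_ne_zero (pow_ne_zero _ two_ne_zero) hk0)
      · calc 2 ^ (n - 8) * k ≤ 2 ^ (n - 8) * 2 ^ 8 := Nat.mul_le_mul_left _ hk2
          _ = 2 ^ n := by rw [← pow_add]; congr 1; omega
      · rw [dim_mul (pow_ne_zero _ two_ne_zero) hk0, dim_two_pow, hkd]
        omega
  rw [T, hset, Finset.card_image_of_injective _
    (mul_right_injective₀ (pow_ne_zero (n - 8) (two_ne_zero)))]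
  have hcongr : (Finset.Icc 1 (2 ^ 8)).filter (fun m => dimension m = 5)
      = (Finset.Icc 1 (2 ^ 8)).filter (fun m => omg (m + m + 1) 2 m = 5) := by
    apply Finset.filter_congr
    intro m _
    rw [dim_omg m]
  rw [hcongr]
  decide
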